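/- Let L : H → G be bounded linear with 0 < ‖L‖ ≤ 1, let B be strictly positive on G, let γ > 0, and set θ = 1/(1 + γ‖B‖). Then θ (L* ∘ B ∘ L) ≼ L ⊡_γ B ≼ L* ∘ B ∘ L, where L ⊡_γ B = L* ∘ (B⁻¹ + γ(Id_G − L L*))⁻¹ ∘ L is the resolvent cocomposition. -/

import Mathlib

open ContinuousLinearMap MeasureTheory RealInnerProductSpace

noncomputable section

variable {E : Type*} [NormedAddCommGroup E] [InnerProductSpace ℝ E] [CompleteSpace E]
variable {H G : Type*} [NormedAddCommGroup H] [InnerProductSpace ℝ H] [CompleteSpace H]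
  [NormedAddCommGroup G] [InnerProductSpace ℝ G] [CompleteSpace G]

/-- Löwner partial order: `A ≼ B` iff `B - A` is a positive operator. -/
def Loewner (A B : E →L[ℝ] E) : Prop := (B - A).IsPositive

/-- Strictly positive operators: `α • Id ≼ A` for some `α > 0`. -/
def StrictlyPos (A : E →L[ℝ] E) : Prop :=
  IsSelfAdjoint A ∧ ∃ α : ℝ, 0 < α ∧ Loewner (α • (1 : E →L[ℝ] E)) A

/-- Bounded below linear operator. -/
def BoundedBelow (L : H →L[ℝ] G) : Prop := ∃ β : ℝ, 0 < β ∧ ∀ x : H, β * ‖x‖ ≤ ‖L x‖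

/-- Resolvent cocomposition `L ⊡_γ B = L* ∘ (B⁻¹ + γ(Id − L L*))⁻¹ ∘ L`. -/
def rcc (L : H →L[ℝ] G) (γ : ℝ) (B : G →L[ℝ] G) : H →L[ℝ] H :=
  (adjoint L) ∘L (Ring.inverse (Ring.inverse B + γ • ((1 : G →L[ℝ] G) - L ∘L adjoint L))) ∘L L

/-- Resolvent composition `L ⊙_γ B = (L ⊡_{1/γ} B⁻¹)⁻¹`. -/
def rc (L : H →L[ℝ] G) (γ : ℝ) (B : G →L[ℝ] G) : H →L[ℝ] H :=
  Ring.inverse (rcc L (1/γ) (Ring.inverse B))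

/-- Parallel composition `L* ▸ B = (L* ∘ B⁻¹ ∘ L)⁻¹`. -/
def parallelComp (L : H →L[ℝ] G) (B : G →L[ℝ] G) : H →L[ℝ] H :=
  Ring.inverse ((adjoint L) ∘L (Ring.inverse B) ∘L L)

/-- `g(A,B) = inf {λ > 0 : A ≼ λ B}`. -/
def gThomp (A B : E →L[ℝ] E) : ℝ := sInf {l : ℝ | 0 < l ∧ Loewner A (l • B)}

/-- Thompson metric. -/
def dThomp (A B : E →L[ℝ] E) : ℝ := Real.log (max (gThomp A B) (gThomp B A))

/-- The (unique) positive square root of a positive operator. -/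
def opSqrt (A : E →L[ℝ] E) : E →L[ℝ] E :=
  letI := Classical.propDecidable
  if h : ∃ S : E →L[ℝ] E, S.IsPositive ∧ S * S = A then h.choose else 0

/-- Real power `A^t` of a strictly positive operator, `t ∈ (0,1)`, via the
Balakrishnan integral formula `A^t = (sin (π t)/π) ∫₀^∞ s^{t-1} A (A + s)⁻¹ ds`. -/
def opRpow (A : E →L[ℝ] E) (t : ℝ) : E →L[ℝ] E :=
  (Real.sin (Real.pi * t) / Real.pi) •
    ∫ s in Set.Ioi (0 : ℝ), s ^ (t - 1) • (A * Ring.inverse (A + s • (1 : E →L[ℝ] E)))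

/-- Geometric mean `A # B = A^{1/2} (A^{-1/2} B A^{-1/2})^{1/2} A^{1/2}`. -/
def geomMean (A B : E →L[ℝ] E) : E →L[ℝ] E :=
  opSqrt A * opSqrt (Ring.inverse (opSqrt A) * B * Ring.inverse (opSqrt A)) * opSqrt A

/-- `t`-weighted geometric mean `A #_t B = A^{1/2} (A^{-1/2} B A^{-1/2})^t A^{1/2}`. -/
def wGeomMean (t : ℝ) (A B : E →L[ℝ] E) : E →L[ℝ] E :=
  opSqrt A * opRpow (Ring.inverse (opSqrt A) * B * Ring.inverse (opSqrt A)) t * opSqrt A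

section Aux

open RealInnerProductSpace

lemma isPositive_iff_real (T : E →L[ℝ] E) :
    T.IsPositive ↔ IsSelfAdjoint T ∧ ∀ x, 0 ≤ ⟪T x, x⟫ := by
  simp [ContinuousLinearMap.IsPositive, ContinuousLinearMap.reApplyInnerSelf]
  exact fun _ => ContinuousLinearMap.isSelfAdjoint_iff_isSymmetric.symm

lemma loewner_iff (A B : E →L[ℝ] E) :
    Loewner A B ↔ IsSelfAdjoint (B - A) ∧ ∀ x, 0 ≤ ⟪B x - A x, x⟫ := by
  rw [Loewner, isPositive_iff_real]
  simp [ContinuousLinearMap.sub_apply]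

lemma loewner_trans {A B C : E →L[ℝ] E} (h1 : Loewner A B) (h2 : Loewner B C) :
    Loewner A C := by
  have := h2.add h1
  rwa [Loewner, ← sub_add_sub_cancel C B A]

lemma isPositive_smul {T : E →L[ℝ] E} (hT : T.IsPositive) {c : ℝ} (hc : 0 ≤ c) :
    (c • T).IsPositive := by
  rw [isPositive_iff_real] at hT ⊢
  refine ⟨IsSelfAdjoint.smul (star_trivial c) hT.1, fun x => ?_⟩
  simp only [ContinuousLinearMap.smul_apply, real_inner_smul_left]
  exact mul_nonneg hc (hT.2 x)

/-- Cauchy–Schwarz for a positive operator. -/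
lemma isPositive_inner_sq_le {T : E →L[ℝ] E} (hT : T.IsPositive) (x y : E) :
    ⟪T x, y⟫ ^ 2 ≤ ⟪T x, x⟫ * ⟪T y, y⟫ := by
  obtain ⟨hsa, hpos⟩ := (isPositive_iff_real T).mp hT
  have hsym : ∀ u v : E, ⟪T u, v⟫ = ⟪T v, u⟫ := by
    intro u v
    calc ⟪T u, v⟫ = ⟪u, T v⟫ := by
          simpa using (isSelfAdjoint_iff_isSymmetric.mp hsa) u v
      _ = ⟪T v, u⟫ := real_inner_comm _ _
  have key : ∀ t : ℝ, 0 ≤ ⟪T y, y⟫ * (t * t) + (2 * ⟪T x, y⟫) * t + ⟪T x, x⟫ := by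
    intro t
    have h0 := hpos (x + t • y)
    have hexp : ⟪T (x + t • y), x + t • y⟫ =
        ⟪T y, y⟫ * (t * t) + (2 * ⟪T x, y⟫) * t + ⟪T x, x⟫ := by
      simp only [map_add, _root_.map_smul, inner_add_left, inner_add_right,
        real_inner_smul_left, real_inner_smul_right]
      rw [hsym y x]
      ring
    linarith [hexp ▸ h0]
  have hd := discrim_le_zero key
  rw [discrim] at hd
  nlinarith [hd]

lemma StrictlyPos.coercive {A : E →L[ℝ] E} (hA : StrictlyPos A) :
    ∃ α : ℝ, 0 < α ∧ ∀ x, α * ‖x‖ ^ 2 ≤ ⟪A x, x⟫ := by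
  obtain ⟨hsa, α, hα, hpos⟩ := hA
  refine ⟨α, hα, fun x => ?_⟩
  have := ((loewner_iff _ _).mp hpos).2 x
  simp only [ContinuousLinearMap.smul_apply, ContinuousLinearMap.one_apply,
    inner_sub_left, real_inner_smul_left, real_inner_self_eq_norm_sq] at this
  linarith

lemma StrictlyPos.isPositive {A : E →L[ℝ] E} (hA : StrictlyPos A) : A.IsPositive := by
  obtain ⟨α, hα, hco⟩ := hA.coercive
  rw [isPositive_iff_real]
  exact ⟨hA.1, fun x => le_trans (by positivity) (hco x)⟩

lemma StrictlyPos.isUnit {A : E →L[ℝ] E} (hA : StrictlyPos A) : IsUnit A := by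
  obtain ⟨α, hα, hco⟩ := hA.coercive
  have hbb : ∀ x, ‖x‖ ≤ (α⁻¹).toNNReal * ‖A x‖ := by
    intro x
    have h1 : α * ‖x‖ * ‖x‖ ≤ ‖A x‖ * ‖x‖ := by
      calc α * ‖x‖ * ‖x‖ = α * ‖x‖ ^ 2 := by ring
        _ ≤ ⟪A x, x⟫ := hco x
        _ ≤ ‖A x‖ * ‖x‖ := real_inner_le_norm _ _
    have hcoe : ((α⁻¹).toNNReal : ℝ) = α⁻¹ := Real.coe_toNNReal _ (by positivity)
    rw [hcoe]
    rcases eq_or_lt_of_le (norm_nonneg x) with h | h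
    · rw [← h]; positivity
    · have h2 : α * ‖x‖ ≤ ‖A x‖ := (mul_le_mul_iff_of_pos_right h).mp h1
      rw [← mul_le_mul_iff_of_pos_left hα, ← mul_assoc, mul_inv_cancel₀ hα.ne', one_mul]
      exact h2
  have hanti : AntilipschitzWith (α⁻¹).toNNReal A :=
    ContinuousLinearMap.antilipschitz_of_bound A hbb
  have hinj : Function.Injective A := hanti.injective
  have hclosed : IsClosed ((LinearMap.range (A : E →ₗ[ℝ] E) : Submodule ℝ E) : Set E) :=
    by simpa [LinearMap.coe_range] using hanti.isClosed_range A.uniformContinuous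
  have hrange : LinearMap.range (A : E →ₗ[ℝ] E) = ⊤ := by
    haveI := hclosed.completeSpace_coe
    rw [← (LinearMap.range (A : E →ₗ[ℝ] E)).orthogonal_orthogonal, Submodule.eq_top_iff']
    intro v
    rw [Submodule.mem_orthogonal]
    intro w hw
    obtain rfl : w = 0 := by
      have h0 : ⟪A w, w⟫ = 0 := (Submodule.mem_orthogonal _ _).mp hw (A w) ⟨w, rfl⟩
      have h1 := hco w
      have h2 : ‖w‖ = 0 := by
        by_contra hne
        have hpos' : 0 < ‖w‖ := lt_of_le_of_ne (norm_nonneg w) (Ne.symm hne)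
        nlinarith [mul_pos hα (mul_pos hpos' hpos')]
      simpa using h2
    exact inner_zero_left _
  let e := ContinuousLinearEquiv.ofBijective A ((LinearMap.ker_eq_bot (f := (A : E →ₗ[ℝ] E))).mpr hinj) hrange
  have hcoe : (e : E →L[ℝ] E) = A := rfl
  exact ⟨e.toUnit, hcoe⟩

lemma ringInverse_eq {A B : E →L[ℝ] E} (h1 : A * B = 1) (h2 : B * A = 1) :
    Ring.inverse A = B :=
  Ring.inverse_unit ⟨A, B, h1, h2⟩

lemma ringInverse_smul {A : E →L[ℝ] E} (hA : IsUnit A) {c : ℝ} (hc : c ≠ 0) :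
    Ring.inverse (c • A) = c⁻¹ • Ring.inverse A := by
  have hsmul : ∀ (a b : ℝ) (S T : E →L[ℝ] E), (a • S) * (b • T) = (a * b) • (S * T) := by
    intro a b S T
    ext x
    simp [ContinuousLinearMap.mul_apply, _root_.map_smul, smul_smul, mul_comm]
  apply ringInverse_eq
  · rw [hsmul, Ring.mul_inverse_cancel _ hA, mul_inv_cancel₀ hc, one_smul]
  · rw [hsmul, Ring.inverse_mul_cancel _ hA, inv_mul_cancel₀ hc, one_smul]

lemma ringInverse_ringInverse {A : E →L[ℝ] E} (hA : IsUnit A) :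
    Ring.inverse (Ring.inverse A) = A :=
  ringInverse_eq (Ring.inverse_mul_cancel _ hA) (Ring.mul_inverse_cancel _ hA)

lemma isSelfAdjoint_ringInverse {A : E →L[ℝ] E} (hA : IsSelfAdjoint A) :
    IsSelfAdjoint (Ring.inverse A) := by
  rw [IsSelfAdjoint, ← Ring.inverse_star, hA.star_eq]

/-- Inverses reverse the Löwner order on strictly positive operators. -/
lemma loewner_ringInverse {A B : E →L[ℝ] E} (hA : StrictlyPos A) (hB : StrictlyPos B)
    (hAB : Loewner A B) : Loewner (Ring.inverse B) (Ring.inverse A) := by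
  have hAu := hA.isUnit
  have hBu := hB.isUnit
  set A' := Ring.inverse A with hA'
  set B' := Ring.inverse B with hB'
  rw [loewner_iff]
  constructor
  · exact (isSelfAdjoint_ringInverse hA.1).sub (isSelfAdjoint_ringInverse hB.1)
  · intro x
    set u := B' x with hu
    set v := A' x with hv
    have hBu' : B u = x := by
      have := congrArg (fun T : E →L[ℝ] E => T x) (Ring.mul_inverse_cancel B hBu)
      simpa [ContinuousLinearMap.mul_apply] using this
    have hAv : A v = x := by
      have := congrArg (fun T : E →L[ℝ] E => T x) (Ring.mul_inverse_cancel A hAu)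
      simpa [ContinuousLinearMap.mul_apply] using this
    set s := ⟪B' x, x⟫ with hs
    set t := ⟪A' x, x⟫ with ht
    have hs' : ⟪B u, u⟫ = s := by
      rw [hBu', hs, hu, real_inner_comm]
    have ht' : ⟪A v, v⟫ = t := by
      rw [hAv, ht, hv, real_inner_comm]
    have hs0 : 0 ≤ s := by
      rw [← hs']
      exact ((isPositive_iff_real _).mp hB.isPositive).2 u
    have ht0 : 0 ≤ t := by
      rw [← ht']
      exact ((isPositive_iff_real _).mp hA.isPositive).2 v
    have hAuu : ⟪A u, u⟫ ≤ s := by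
      have h := ((loewner_iff _ _).mp hAB).2 u
      rw [inner_sub_left] at h
      rw [← hs']
      linarith
    have hAuu0 : 0 ≤ ⟪A u, u⟫ := ((isPositive_iff_real _).mp hA.isPositive).2 u
    have hsv : s = ⟪A u, v⟫ := by
      have h1 : ⟪A u, v⟫ = ⟪u, A v⟫ := by
        simpa using (isSelfAdjoint_iff_isSymmetric.mp hA.1) u v
      rw [h1, hAv]
    have hcs : s ^ 2 ≤ ⟪A u, u⟫ * t := by
      calc s ^ 2 = ⟪A u, v⟫ ^ 2 := by rw [hsv]
        _ ≤ ⟪A u, u⟫ * ⟪A v, v⟫ := isPositive_inner_sq_le hA.isPositive u v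
        _ = ⟪A u, u⟫ * t := by rw [ht']
    have hst : s ^ 2 ≤ s * t := le_trans hcs (mul_le_mul_of_nonneg_right hAuu ht0)
    have hfinal : s ≤ t := by
      rcases eq_or_lt_of_le hs0 with h | h
      · linarith
      · nlinarith
    have : ⟪A' x - B' x, x⟫ = t - s := by rw [inner_sub_left]
    linarith [this]

lemma loewner_opNorm_smul_one {B : E →L[ℝ] E} (hB : IsSelfAdjoint B) :
    Loewner B (‖B‖ • (1 : E →L[ℝ] E)) := by
  rw [loewner_iff]
  constructor
  · exact (IsSelfAdjoint.smul (star_trivial _) (.one _)).sub hB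
  · intro x
    simp only [ContinuousLinearMap.smul_apply, ContinuousLinearMap.one_apply,
      inner_sub_left, real_inner_smul_left, real_inner_self_eq_norm_sq]
    have h1 : ⟪B x, x⟫ ≤ ‖B x‖ * ‖x‖ := real_inner_le_norm _ _
    have h2 : ‖B x‖ ≤ ‖B‖ * ‖x‖ := B.le_opNorm x
    nlinarith [norm_nonneg x, norm_nonneg (B x)]

lemma loewner_conj {A B : G →L[ℝ] G} (L : H →L[ℝ] G) (h : Loewner A B) :
    Loewner ((adjoint L) ∘L A ∘L L) ((adjoint L) ∘L B ∘L L) := by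
  have := h.adjoint_conj L
  rw [Loewner, ← ContinuousLinearMap.comp_sub, ← ContinuousLinearMap.sub_comp]
  exact this

end Aux

theorem rcc_sandwich (L : H →L[ℝ] G) (hL0 : 0 < ‖L‖) (hL1 : ‖L‖ ≤ 1)
    (B : G →L[ℝ] G) (hB : StrictlyPos B) (γ : ℝ) (hγ : 0 < γ) :
    Loewner ((1 / (1 + γ * ‖B‖)) • ((adjoint L) ∘L B ∘L L)) (rcc L γ B) ∧
      Loewner (rcc L γ B) ((adjoint L) ∘L B ∘L L) := by
  classical
  -- G is nontrivial since L ≠ 0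
  have hLne : L ≠ 0 := by
    intro h; rw [h] at hL0; simp at hL0
  have hex : ∃ x : H, L x ≠ 0 := by
    by_contra h
    push_neg at h
    exact hLne (ContinuousLinearMap.ext fun x => by simp [h x])
  obtain ⟨x₀, hx₀⟩ := hex
  haveI : Nontrivial G := ⟨L x₀, 0, hx₀⟩
  -- norm of B is positive
  obtain ⟨α, hα, hco⟩ := hB.coercive
  have hnB : 0 < ‖B‖ := by
    obtain ⟨y, hy⟩ := exists_ne (0 : G)
    have h1 := hco y
    have h2 : ⟪B y, y⟫ ≤ ‖B‖ * ‖y‖ * ‖y‖ := by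
      calc ⟪B y, y⟫ ≤ ‖B y‖ * ‖y‖ := real_inner_le_norm _ _
        _ ≤ ‖B‖ * ‖y‖ * ‖y‖ :=
          mul_le_mul_of_nonneg_right (B.le_opNorm y) (norm_nonneg y)
    have hy' : 0 < ‖y‖ := norm_pos_iff.mpr hy
    nlinarith [mul_pos hy' hy', mul_pos hα (mul_pos hy' hy')]
  have hBu := hB.isUnit
  set B' := Ring.inverse B with hB'def
  set c : ℝ := 1 + γ * ‖B‖ with hcdef
  have hc : 0 < c := by positivity
  -- B ≼ ‖B‖ • 1 and hence ‖B‖⁻¹ • 1 ≼ B⁻¹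
  have spNorm1 : StrictlyPos (‖B‖ • (1 : G →L[ℝ] G)) := by
    refine ⟨IsSelfAdjoint.smul (star_trivial _) (.one _), ‖B‖, hnB, ?_⟩
    rw [Loewner, sub_self]
    exact ContinuousLinearMap.isPositive_zero
  have h1 : Loewner B (‖B‖ • (1 : G →L[ℝ] G)) := loewner_opNorm_smul_one hB.1
  have hinv1 : Loewner (‖B‖⁻¹ • (1 : G →L[ℝ] G)) B' := by
    have := loewner_ringInverse hB spNorm1 h1
    rwa [ringInverse_smul isUnit_one hnB.ne', Ring.inverse_one] at this
  have spB' : StrictlyPos B' :=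
    ⟨isSelfAdjoint_ringInverse hB.1, ‖B‖⁻¹, inv_pos.mpr hnB, hinv1⟩
  -- 1 - L L* is positive
  have hadjnorm : ‖adjoint L‖ = ‖L‖ := by
    simpa using (ContinuousLinearMap.adjoint (𝕜 := ℝ) (E := H) (F := G)).norm_map L
  have hQsa : IsSelfAdjoint ((1 : G →L[ℝ] G) - L ∘L adjoint L) := by
    rw [IsSelfAdjoint, star_sub, star_one, ContinuousLinearMap.star_eq_adjoint,
      ContinuousLinearMap.adjoint_comp, ContinuousLinearMap.adjoint_adjoint]
  have hQ : ((1 : G →L[ℝ] G) - L ∘L adjoint L).IsPositive := by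
    rw [isPositive_iff_real]
    refine ⟨hQsa, fun x => ?_⟩
    have hLLx : ⟪(L ∘L adjoint L) x, x⟫ = ‖adjoint L x‖ ^ 2 := by
      simp only [ContinuousLinearMap.coe_comp', Function.comp_apply]
      rw [← ContinuousLinearMap.adjoint_inner_right L (adjoint L x) x,
        real_inner_self_eq_norm_sq]
    have hle : ‖adjoint L x‖ ≤ ‖x‖ := by
      calc ‖adjoint L x‖ ≤ ‖adjoint L‖ * ‖x‖ := (adjoint L).le_opNorm x
        _ ≤ 1 * ‖x‖ := by
            apply mul_le_mul_of_nonneg_right _ (norm_nonneg x)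
            rw [hadjnorm]; exact hL1
        _ = ‖x‖ := one_mul _
    simp only [ContinuousLinearMap.sub_apply, ContinuousLinearMap.one_apply,
      inner_sub_left, real_inner_self_eq_norm_sq, hLLx]
    nlinarith [norm_nonneg (adjoint L x), norm_nonneg x]
  -- L L* is positive
  have hLL : (L ∘L adjoint L : G →L[ℝ] G).IsPositive := by
    rw [isPositive_iff_real]
    constructor
    · rw [IsSelfAdjoint, ContinuousLinearMap.star_eq_adjoint,
        ContinuousLinearMap.adjoint_comp, ContinuousLinearMap.adjoint_adjoint]
    · intro x
      simp only [ContinuousLinearMap.coe_comp', Function.comp_apply]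
      rw [← ContinuousLinearMap.adjoint_inner_right L (adjoint L x) x,
        real_inner_self_eq_norm_sq]
      positivity
  set M : G →L[ℝ] G := Ring.inverse B + γ • ((1 : G →L[ℝ] G) - L ∘L adjoint L) with hMdef
  -- B' ≼ M
  have hBM : Loewner B' M := by
    rw [Loewner]
    have : M - B' = γ • ((1 : G →L[ℝ] G) - L ∘L adjoint L) := by
      rw [hMdef, hB'def]; abel
    rw [this]
    exact isPositive_smul hQ hγ.le
  -- M is strictly positive
  have spM : StrictlyPos M := by
    refine ⟨?_, ‖B‖⁻¹, inv_pos.mpr hnB, loewner_trans hinv1 hBM⟩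
    exact (isSelfAdjoint_ringInverse hB.1).add (IsSelfAdjoint.smul (star_trivial γ) hQsa)
  -- M ≼ c • B'
  have hMc : Loewner M (c • B') := by
    rw [Loewner]
    have heq : c • B' - M =
        γ • (‖B‖ • B' - (1 : G →L[ℝ] G)) + γ • (L ∘L adjoint L) := by
      rw [hMdef, hB'def, hcdef]
      module
    rw [heq]
    refine (isPositive_smul ?_ hγ.le).add (isPositive_smul hLL hγ.le)
    have : ‖B‖ • B' - (1 : G →L[ℝ] G) =
        ‖B‖ • (B' - ‖B‖⁻¹ • (1 : G →L[ℝ] G)) := by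
      rw [smul_sub, smul_smul, mul_inv_cancel₀ hnB.ne', one_smul]
    rw [this]
    exact isPositive_smul hinv1 hnB.le
  -- c • B' is strictly positive
  have spcB' : StrictlyPos (c • B') := by
    refine ⟨IsSelfAdjoint.smul (star_trivial c) spB'.1, c * ‖B‖⁻¹, by positivity, ?_⟩
    rw [Loewner]
    have : c • B' - (c * ‖B‖⁻¹) • (1 : G →L[ℝ] G) =
        c • (B' - ‖B‖⁻¹ • (1 : G →L[ℝ] G)) := by
      rw [smul_sub, smul_smul]
    rw [this]
    exact isPositive_smul hinv1 hc.le
  -- invert the sandwich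
  have hMu := spM.isUnit
  have hinvMB : Loewner (Ring.inverse M) B := by
    have := loewner_ringInverse spB' spM hBM
    rwa [hB'def, ringInverse_ringInverse hBu] at this
  have hcBinvM : Loewner (c⁻¹ • B) (Ring.inverse M) := by
    have := loewner_ringInverse spM spcB' hMc
    rwa [ringInverse_smul spB'.isUnit hc.ne', hB'def,
      ringInverse_ringInverse hBu] at this
  -- conjugate by L
  have hrcc : rcc L γ B = (adjoint L) ∘L (Ring.inverse M) ∘L L := rfl
  constructor
  · have := loewner_conj L hcBinvM
    rw [hrcc]
    have heq : (adjoint L) ∘L (c⁻¹ • B) ∘L L =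
        (1 / c) • ((adjoint L) ∘L B ∘L L) := by
      rw [one_div, ContinuousLinearMap.smul_comp, ContinuousLinearMap.comp_smul]
    rwa [heq] at this
  · rw [hrcc]
    exact loewner_conj L hinvMB

end
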